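/- Let 1 ≤ d ≤ n, L = I(d,n), N = d(n−d), and fix a maximal chain C in L with associated order-preserving enumeration m_0 = O, m_1, …, m_N of J(L), defining the valuation ν_{C,Spec} and the sets Γ_j ⊂ ℤ^{N+1} as described. Then the Newton–Okounkov body NO_C := closure of the convex hull of ∪_{j ≥ 1} {v/j : v ∈ Γ_j} ⊂ ℝ^{N+1} equals {1} × P, where P ⊆ ℝ^N is the image of the order polytope of the poset J(L) \ {O} under the coordinate identification i ↦ m_i (i = 1, …, N); since the poset J(L) \ {O} is isomorphic to the grid poset R_{d,n}, P is, up to a coordinate permutation, the order polytope of R_{d,n}, i.e. NO_C is unimodularly equivalent to the Gelfand–Tsetlin polytope of Gr_{d,n}. -/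

import Mathlib

/-- `I(d,n)`: strictly increasing `d`-tuples with entries in `{1, …, n}`. -/
def Idn (d n : ℕ) : Type :=
  {v : Fin d → ℕ // StrictMono v ∧ ∀ t : Fin d, 1 ≤ v t ∧ v t ≤ n}

/-- Join (componentwise maximum) on `I(d,n)`. -/
def idnJoin {d n : ℕ} (a b : Idn d n) : Idn d n :=
  ⟨fun t => max (a.val t) (b.val t), by
    constructor
    · intro i j hij
      exact max_lt_max (a.prop.1 hij) (b.prop.1 hij)
    · intro t
      exact ⟨le_max_of_le_left (a.prop.2 t).1,
        max_le (a.prop.2 t).2 (b.prop.2 t).2⟩⟩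

/-- Join-irreducible elements of `I(d,n)` (the minimum `[1, …, d]` counts as
join-irreducible). -/
def idnJI {d n : ℕ} (I : Idn d n) : Prop :=
  ∀ a b : Idn d n, I = idnJoin a b → I = a ∨ I = b

/-- The componentwise partial order on `I(d,n)`. -/
def idnLE {d n : ℕ} (a b : Idn d n) : Prop := ∀ r : Fin d, a.val r ≤ b.val r

/-- The strict componentwise order on `I(d,n)`. -/
def idnLT {d n : ℕ} (a b : Idn d n) : Prop := idnLE a b ∧ a ≠ b

/-- An order-preserving enumeration `m 0 = [1,…,d], m 1, …, m N` of the join-irreducible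
elements of `I(d,n)`. -/
def IsEnumI (d n N : ℕ) (m : ℕ → Idn d n) : Prop :=
  (∀ r : Fin d, (m 0).val r = (r : ℕ) + 1) ∧
  (∀ i, i ≤ N → ∀ j, j ≤ N → m i = m j → i = j) ∧
  (∀ i, i ≤ N → idnJI (m i)) ∧
  (∀ x : Idn d n, idnJI x → ∃ i ≤ N, m i = x) ∧
  (∀ i, i ≤ N → ∀ j, j ≤ N → idnLT (m i) (m j) → i < j)

open MvPolynomial in
-- The Hibi ring generator `u ℓ = ∏_{i ≤ N, m i ∈ Spec ℓ} y i ∈ ℂ[y_0, y_1, …]`.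
open Classical in
noncomputable def hibiU (d n N : ℕ) (m : ℕ → Idn d n) (ℓ : Idn d n) :
    MvPolynomial ℕ ℂ :=
  ∏ i ∈ Finset.range (N + 1), if idnLE (m i) ℓ then X i else 1

/-- The reverse lexicographic order relation used on the exponents in the variables
`y_1, y_2, …` . -/
def RLE (v w : ℕ → ℤ) : Prop :=
  v = w ∨ ∃ i : ℕ, v i < w i ∧ ∀ j : ℕ, i < j → v j = w j

/-- The exponent vector of a monomial of `ℂ[y_0, y_1, …]`, with the `y_0`-coordinate
suppressed. -/
def res (s : ℕ →₀ ℕ) : ℕ → ℤ := fun i => if i = 0 then 0 else (s i : ℤ)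

/-- The level-`j` part `Γ_j ⊂ ℤ^{N+1}` of the valuation monoid: the values
`j·e_0 + ν_{C,Spec}(h / y_0^j)` over the nonzero degree-`j` homogeneous elements `h` of
the Hibi ring, where `ν_{C,Spec}` takes the reverse-lexicographic minimum of the
exponent vectors in `y_1, …, y_N` over the support. -/
def Gam (d n N : ℕ) (m : ℕ → Idn d n) (j : ℕ) : Set (ℕ → ℤ) :=
  {w : ℕ → ℤ | ∃ h : MvPolynomial ℕ ℂ,
    h ∈ Algebra.adjoin ℂ (Set.range (hibiU d n N m)) ∧ h ≠ 0 ∧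
    (∀ s ∈ h.support, s 0 = j) ∧
    ∃ s₀ ∈ h.support, (∀ s' ∈ h.support, RLE (res s₀) (res s')) ∧
      w 0 = (j : ℤ) ∧ ∀ i : ℕ, 1 ≤ i → w i = (s₀ i : ℤ)}

/-- The underlying set of the poset `R_{d,n}`: pairs `(i,j)` with `1 ≤ i ≤ d`,
`d ≤ j ≤ n−1`, ordered componentwise. -/
def Rset (d n : ℕ) : Set (ℕ × ℕ) :=
  {p : ℕ × ℕ | 1 ≤ p.1 ∧ p.1 ≤ d ∧ d ≤ p.2 ∧ p.2 ≤ n - 1}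

section Basics

variable {d n : ℕ}

lemma idnLE_refl (a : Idn d n) : idnLE a a := fun _ => le_rfl

lemma idnLE_trans {a b c : Idn d n} (h1 : idnLE a b) (h2 : idnLE b c) : idnLE a c :=
  fun r => (h1 r).trans (h2 r)

lemma idnLE_antisymm {a b : Idn d n} (h1 : idnLE a b) (h2 : idnLE b a) : a = b :=
  Subtype.ext (funext fun r => le_antisymm (h1 r) (h2 r))

/-- gap lemma for strictly monotone `Fin d → ℕ`. -/
lemma sm_gap {v : Fin d → ℕ} (hv : StrictMono v) :
    ∀ k : ℕ, ∀ i j : Fin d, (j : ℕ) = (i : ℕ) + k → v i + k ≤ v j := by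
  intro k
  induction k with
  | zero =>
    intro i j hij
    have : i = j := Fin.ext (by omega)
    simp [this]
  | succ k ih =>
    intro i j hij
    have hlt : (i : ℕ) + k < d := by omega
    have h1 : v i + k ≤ v ⟨(i : ℕ) + k, hlt⟩ := ih i ⟨(i : ℕ) + k, hlt⟩ rfl
    have h2 : v ⟨(i : ℕ) + k, hlt⟩ < v j := hv (by simp [Fin.lt_def]; omega)
    omega

lemma idn_lb (a : Idn d n) (r : Fin d) : (r : ℕ) + 1 ≤ a.val r := by
  have hd' : 0 < d := r.pos
  have := sm_gap a.prop.1 (r : ℕ) ⟨0, hd'⟩ r (by simp)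
  have := (a.prop.2 ⟨0, hd'⟩).1
  omega

lemma idn_bot_le (hm0 : ∀ r : Fin d, (a0 : Idn d n).val r = (r : ℕ) + 1) (b : Idn d n) :
    idnLE a0 b := fun r => by rw [hm0 r]; exact idn_lb b r

lemma le_idnJoin_left (a b : Idn d n) : idnLE a (idnJoin a b) := fun r => le_max_left _ _
lemma le_idnJoin_right (a b : Idn d n) : idnLE b (idnJoin a b) := fun r => le_max_right _ _
lemma idnJoin_le {a b c : Idn d n} (h1 : idnLE a c) (h2 : idnLE b c) :
    idnLE (idnJoin a b) c := fun r => max_le (h1 r) (h2 r)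

/-- Meet (componentwise minimum). -/
def idnMeet (a b : Idn d n) : Idn d n :=
  ⟨fun t => min (a.val t) (b.val t), by
    constructor
    · intro i j hij
      exact lt_min ((min_le_left _ _).trans_lt (a.prop.1 hij))
        ((min_le_right _ _).trans_lt (b.prop.1 hij))
    · intro t
      exact ⟨le_min (a.prop.2 t).1 (b.prop.2 t).1,
        (min_le_left _ _).trans (a.prop.2 t).2⟩⟩

lemma idnMeet_le_left (a b : Idn d n) : idnLE (idnMeet a b) a := fun r => min_le_left _ _
lemma idnMeet_le_right (a b : Idn d n) : idnLE (idnMeet a b) b := fun r => min_le_right _ _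

/-- Join-irreducible elements are join-prime. -/
lemma ji_prime {p a b : Idn d n} (hp : idnJI p) (h : idnLE p (idnJoin a b)) :
    idnLE p a ∨ idnLE p b := by
  have key : p = idnJoin (idnMeet p a) (idnMeet p b) := by
    apply Subtype.ext; funext r
    have := h r
    show p.val r = max (min (p.val r) (a.val r)) (min (p.val r) (b.val r))
    rw [← min_max_distrib_left]
    simp only [idnJoin] at this ⊢
    omega
  rcases hp _ _ key with h1 | h1
  · exact Or.inl (fun r => h1 ▸ (idnMeet_le_right p a r).trans_eq rfl)
  · exact Or.inr (fun r => h1 ▸ (idnMeet_le_right p b r).trans_eq rfl)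

/-- fold-join of a list of elements over a base. -/
def listJoin (b : Idn d n) : List (Idn d n) → Idn d n
  | [] => b
  | a :: l => idnJoin a (listJoin b l)

lemma le_listJoin_base (b : Idn d n) (l : List (Idn d n)) : idnLE b (listJoin b l) := by
  induction l with
  | nil => exact idnLE_refl b
  | cons a l ih => exact idnLE_trans ih (le_idnJoin_right _ _)

lemma le_listJoin_mem (b : Idn d n) (l : List (Idn d n)) {a : Idn d n} (ha : a ∈ l) :
    idnLE a (listJoin b l) := by
  induction l with
  | nil => simp at ha
  | cons c l ih =>
    rcases List.mem_cons.mp ha with h | h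
    · exact h ▸ le_idnJoin_left _ _
    · exact idnLE_trans (ih h) (le_idnJoin_right _ _)

lemma listJoin_le {b c : Idn d n} {l : List (Idn d n)} (hb : idnLE b c)
    (hl : ∀ a ∈ l, idnLE a c) : idnLE (listJoin b l) c := by
  induction l with
  | nil => exact hb
  | cons a l ih =>
    exact idnJoin_le (hl a List.mem_cons_self) (ih fun a' ha' => hl a' (List.mem_cons_of_mem _ ha'))

lemma ji_le_listJoin {p b : Idn d n} {l : List (Idn d n)} (hp : idnJI p)
    (h : idnLE p (listJoin b l)) : idnLE p b ∨ ∃ a ∈ l, idnLE p a := by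
  induction l with
  | nil => exact Or.inl h
  | cons a l ih =>
    rcases ji_prime hp h with h1 | h1
    · exact Or.inr ⟨a, List.mem_cons_self, h1⟩
    · rcases ih h1 with h2 | ⟨a', ha', h2⟩
      · exact Or.inl h2
      · exact Or.inr ⟨a', List.mem_cons_of_mem _ ha', h2⟩

end Basics
section Hibi

open MvPolynomial
open Classical

variable {d n : ℕ} (N : ℕ) (m : ℕ → Idn d n)

/-- "Good" exponent vectors. -/
def Good (d n N : ℕ) (m : ℕ → Idn d n) (s : ℕ →₀ ℕ) : Prop :=
  (∀ i, s i ≤ s 0) ∧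
  (∀ i j, 1 ≤ i → i ≤ N → 1 ≤ j → j ≤ N → idnLE (m i) (m j) → s j ≤ s i) ∧
  (∀ i, N < i → s i = 0)

/-- The exponent of the generator `u_ℓ`. -/
noncomputable def sfun (d n N : ℕ) (m : ℕ → Idn d n) (ℓ : Idn d n) : ℕ →₀ ℕ :=
  ∑ i ∈ (Finset.range (N + 1)).filter (fun i => idnLE (m i) ℓ), Finsupp.single i 1

lemma sfun_apply (ℓ : Idn d n) (k : ℕ) :
    sfun d n N m ℓ k = if k ≤ N ∧ idnLE (m k) ℓ then 1 else 0 := by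
  classical
  rw [sfun, Finset.sum_apply']
  simp only [Finsupp.single_apply, Finset.sum_ite_eq (ι := ℕ)]
  simp [Finset.mem_filter, Nat.lt_succ_iff]

lemma prod_monomial_one (F : Finset ℕ) (g : ℕ → (ℕ →₀ ℕ)) :
    (∏ i ∈ F, (monomial (g i) (1 : ℂ))) = monomial (∑ i ∈ F, g i) 1 := by
  classical
  induction F using Finset.induction with
  | empty => simp
  | insert a s ha ih =>
    rw [Finset.prod_insert ha, Finset.sum_insert ha, ih, monomial_mul, one_mul]

lemma hibiU_eq_monomial (ℓ : Idn d n) :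
    hibiU d n N m ℓ = monomial (sfun d n N m ℓ) 1 := by
  classical
  rw [hibiU, sfun, Finset.sum_filter, ← prod_monomial_one]
  apply Finset.prod_congr rfl
  intro i _
  by_cases h : idnLE (m i) ℓ <;> simp [h, MvPolynomial.X]

lemma good_sfun (hm0 : ∀ r : Fin d, (m 0).val r = (r : ℕ) + 1) (ℓ : Idn d n) :
    Good d n N m (sfun d n N m ℓ) ∧ sfun d n N m ℓ 0 = 1 := by
  constructor
  · have h0 : sfun d n N m ℓ 0 = 1 := by
      rw [sfun_apply, if_pos ⟨Nat.zero_le N, idn_bot_le hm0 ℓ⟩]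
    refine ⟨?_, ?_, ?_⟩
    · intro i
      rw [h0, sfun_apply]
      split <;> omega
    · intro i j _ hiN _ hjN hij
      rw [sfun_apply, sfun_apply]
      by_cases hj : idnLE (m j) ℓ
      · rw [if_pos ⟨hjN, hj⟩, if_pos ⟨hiN, idnLE_trans hij hj⟩]
      · rw [if_neg (fun h => hj h.2)]
        omega
    · intro i hi
      rw [sfun_apply, if_neg (fun h => absurd h.1 (by omega))]
  · rw [sfun_apply, if_pos ⟨Nat.zero_le N, idn_bot_le hm0 ℓ⟩]

/-- every element of the multiplicative closure of the generators is a good monomial. -/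
lemma closure_monomial (hm0 : ∀ r : Fin d, (m 0).val r = (r : ℕ) + 1)
    {p : MvPolynomial ℕ ℂ} (hp : p ∈ Submonoid.closure (Set.range (hibiU d n N m))) :
    ∃ s : ℕ →₀ ℕ, p = monomial s 1 ∧ Good d n N m s := by
  induction hp using Submonoid.closure_induction with
  | mem x hx =>
    obtain ⟨ℓ, rfl⟩ := hx
    exact ⟨sfun d n N m ℓ, hibiU_eq_monomial N m ℓ, (good_sfun N m hm0 ℓ).1⟩
  | one =>
    refine ⟨0, by simp, ?_, ?_, ?_⟩ <;> simp
  | mul x y _ _ hx hy =>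
    obtain ⟨s, rfl, hs⟩ := hx
    obtain ⟨t, rfl, ht⟩ := hy
    refine ⟨s + t, by rw [monomial_mul, one_mul], ?_, ?_, ?_⟩
    · intro i; have := hs.1 i; have := ht.1 i; simp only [Finsupp.add_apply]; omega
    · intro i j h1 h2 h3 h4 h5
      have := hs.2.1 i j h1 h2 h3 h4 h5; have := ht.2.1 i j h1 h2 h3 h4 h5
      simp only [Finsupp.add_apply]; omega
    · intro i hi; have := hs.2.2 i hi; have := ht.2.2 i hi
      simp only [Finsupp.add_apply]; omega

/-- every support element of a member of the Hibi ring is good. -/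
lemma adjoin_support_good (hm0 : ∀ r : Fin d, (m 0).val r = (r : ℕ) + 1)
    {h : MvPolynomial ℕ ℂ} (hh : h ∈ Algebra.adjoin ℂ (Set.range (hibiU d n N m))) :
    ∀ s ∈ h.support, Good d n N m s := by
  rw [← Subalgebra.mem_toSubmodule, Algebra.adjoin_eq_span] at hh
  induction hh using Submodule.span_induction with
  | mem x hx =>
    obtain ⟨s, rfl, hs⟩ := closure_monomial N m hm0 hx
    intro s' hs'
    rw [support_monomial, if_neg one_ne_zero] at hs'
    rwa [Finset.mem_singleton.mp hs']
  | zero => simp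
  | add x y _ _ hx hy =>
    intro s hs
    rcases Finset.mem_union.mp (MvPolynomial.support_add hs) with h | h
    · exact hx s h
    · exact hy s h
  | smul c x _ hx =>
    intro s hs
    exact hx s (MvPolynomial.support_smul hs)

end Hibi
section Part1

open MvPolynomial Classical

variable (d n N : ℕ) (m : ℕ → Idn d n)

/-- The set whose convex hull is taken. -/
def Sset : Set (ℕ → ℝ) :=
  {x : ℕ → ℝ | ∃ j : ℕ, 1 ≤ j ∧ ∃ w ∈ Gam d n N m j,
    x = (j : ℝ)⁻¹ • fun i : ℕ => (w i : ℝ)}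

/-- The target polytope. -/
def RHSset : Set (ℕ → ℝ) :=
  {x : ℕ → ℝ | x 0 = 1 ∧
    (∀ i : ℕ, 1 ≤ i → i ≤ N → 0 ≤ x i ∧ x i ≤ 1) ∧
    (∀ i j : ℕ, 1 ≤ i → i ≤ N → 1 ≤ j → j ≤ N →
      idnLE (m i) (m j) → x j ≤ x i) ∧
    (∀ i : ℕ, N < i → x i = 0)}

lemma rhs_convex : Convex ℝ (RHSset d n N m) := by
  intro x hx y hy a b ha hb hab
  obtain ⟨hx0, hx1, hx2, hx3⟩ := hx
  obtain ⟨hy0, hy1, hy2, hy3⟩ := hy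
  have hev : ∀ i, (a • x + b • y) i = a * x i + b * y i := fun i => rfl
  refine ⟨by rw [hev 0, hx0, hy0]; ring_nf; linarith, ?_, ?_, ?_⟩
  · intro i h1 h2
    obtain ⟨u1, u2⟩ := hx1 i h1 h2
    obtain ⟨v1, v2⟩ := hy1 i h1 h2
    rw [hev i]
    constructor
    · positivity
    · nlinarith
  · intro i j h1 h2 h3 h4 h5
    have := hx2 i j h1 h2 h3 h4 h5
    have := hy2 i j h1 h2 h3 h4 h5
    rw [hev i, hev j]
    nlinarith
  · intro i hi
    rw [hev i, hx3 i hi, hy3 i hi]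
    ring

lemma imp_closed (P : Prop) (s : Set (ℕ → ℝ)) (hs : IsClosed s) :
    IsClosed {x : ℕ → ℝ | P → x ∈ s} := by
  by_cases hP : P
  · simp only [hP, forall_const]; exact hs
  · have : {x : ℕ → ℝ | P → x ∈ s} = Set.univ := by ext x; simp [hP]
    rw [this]; exact isClosed_univ

lemma rhs_closed : IsClosed (RHSset d n N m) := by
  have hrep : RHSset d n N m =
      {x : ℕ → ℝ | x 0 = 1} ∩
      ((⋂ i : ℕ, {x : ℕ → ℝ | (1 ≤ i ∧ i ≤ N) → x ∈ {x : ℕ → ℝ | 0 ≤ x i}}) ∩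
      ((⋂ i : ℕ, {x : ℕ → ℝ | (1 ≤ i ∧ i ≤ N) → x ∈ {x : ℕ → ℝ | x i ≤ 1}}) ∩
      ((⋂ i : ℕ, ⋂ j : ℕ, {x : ℕ → ℝ |
          (1 ≤ i ∧ i ≤ N ∧ 1 ≤ j ∧ j ≤ N ∧ idnLE (m i) (m j)) →
            x ∈ {x : ℕ → ℝ | x j ≤ x i}}) ∩
      (⋂ i : ℕ, {x : ℕ → ℝ | N < i → x ∈ {x : ℕ → ℝ | x i = 0}})))) := by
    ext x
    simp only [RHSset, Set.mem_setOf_eq, Set.mem_inter_iff, Set.mem_iInter]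
    constructor
    · rintro ⟨h0, h1, h2, h3⟩
      exact ⟨h0, fun i hi => (h1 i hi.1 hi.2).1, fun i hi => (h1 i hi.1 hi.2).2,
        fun i j hij => h2 i j hij.1 hij.2.1 hij.2.2.1 hij.2.2.2.1 hij.2.2.2.2, h3⟩
    · rintro ⟨h0, h1, h2, h3, h4⟩
      exact ⟨h0, fun i a b => ⟨h1 i ⟨a, b⟩, h2 i ⟨a, b⟩⟩,
        fun i j a b c e f => h3 i j ⟨a, b, c, e, f⟩, h4⟩
  rw [hrep]
  refine IsClosed.inter (isClosed_eq (continuous_apply 0) continuous_const) ?_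
  refine IsClosed.inter (isClosed_iInter fun i =>
    imp_closed _ _ (isClosed_le continuous_const (continuous_apply i))) ?_
  refine IsClosed.inter (isClosed_iInter fun i =>
    imp_closed _ _ (isClosed_le (continuous_apply i) continuous_const)) ?_
  refine IsClosed.inter (isClosed_iInter fun i => isClosed_iInter fun j =>
    imp_closed _ _ (isClosed_le (continuous_apply j) (continuous_apply i))) ?_
  exact isClosed_iInter fun i =>
    imp_closed _ _ (isClosed_eq (continuous_apply i) continuous_const)

lemma sset_sub_rhs (hm0 : ∀ r : Fin d, (m 0).val r = (r : ℕ) + 1) :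
    Sset d n N m ⊆ RHSset d n N m := by
  rintro x ⟨j, hj, w, hw, rfl⟩
  obtain ⟨h, hadj, -, hdeg, s₀, hs₀, -, hw0, hwi⟩ := hw
  have hgood := adjoin_support_good N m hm0 hadj s₀ hs₀
  have hs00 : s₀ 0 = j := hdeg s₀ hs₀
  have hjpos : (0:ℝ) < (j:ℝ) := by exact_mod_cast hj
  have hev : ∀ i : ℕ, ((j:ℝ)⁻¹ • fun i : ℕ => ((w i : ℤ) : ℝ)) i = (j:ℝ)⁻¹ * (w i : ℝ) :=
    fun i => rfl
  refine ⟨?_, ?_, ?_, ?_⟩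
  · rw [hev 0, hw0]
    push_cast
    field_simp
  · intro i h1 h2
    rw [hev i, hwi i h1]
    have h3 : s₀ i ≤ j := hs00 ▸ hgood.1 i
    constructor
    · positivity
    · rw [inv_mul_le_iff₀ hjpos, mul_one]
      exact_mod_cast h3
  · intro i j' h1 h2 h3 h4 h5
    rw [hev i, hev j', hwi i h1, hwi j' h3]
    have := hgood.2.1 i j' h1 h2 h3 h4 h5
    have : ((s₀ j' : ℤ) : ℝ) ≤ ((s₀ i : ℤ) : ℝ) := by exact_mod_cast this
    have hinv : (0:ℝ) ≤ (j:ℝ)⁻¹ := by positivity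
    exact mul_le_mul_of_nonneg_left this hinv
  · intro i hi
    have h1 : 1 ≤ i := by omega
    rw [hev i, hwi i h1, hgood.2.2 i hi]
    simp

end Part1
section Part1b

open MvPolynomial Classical

variable {d n : ℕ} (N : ℕ) (m : ℕ → Idn d n)

/-- The vertex point associated to `ℓ`. -/
noncomputable def vpt (ℓ : Idn d n) : ℕ → ℝ :=
  fun i => if i = 0 then 1 else if i ≤ N ∧ idnLE (m i) ℓ then 1 else 0

lemma vpt_mem_sset (hm0 : ∀ r : Fin d, (m 0).val r = (r : ℕ) + 1) (ℓ : Idn d n) :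
    vpt N m ℓ ∈ Sset d n N m := by
  classical
  refine ⟨1, le_rfl, fun i => if i = 0 then 1 else ((sfun d n N m ℓ i : ℤ)), ?_, ?_⟩
  · refine ⟨hibiU d n N m ℓ, Algebra.subset_adjoin ⟨ℓ, rfl⟩, ?_, ?_, ?_⟩
    · rw [hibiU_eq_monomial, Ne, MvPolynomial.monomial_eq_zero]
      exact one_ne_zero
    · intro s hs
      rw [hibiU_eq_monomial, support_monomial, if_neg one_ne_zero] at hs
      rw [Finset.mem_singleton.mp hs]
      exact (good_sfun N m hm0 ℓ).2
    · refine ⟨sfun d n N m ℓ, ?_, fun s' hs' => ?_, by simp, fun i hi => by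
        simp only []
        rw [if_neg (by omega : ¬ i = 0)]⟩
      · rw [hibiU_eq_monomial, support_monomial, if_neg one_ne_zero]
        exact Finset.mem_singleton_self _
      · rw [hibiU_eq_monomial, support_monomial, if_neg one_ne_zero] at hs'
        rw [Finset.mem_singleton.mp hs']
        exact Or.inl rfl
  · funext i
    simp only [Pi.smul_apply, smul_eq_mul, Nat.cast_one, inv_one, one_mul, vpt]
    by_cases h0 : i = 0
    · simp [h0]
    · rw [if_neg h0, if_neg h0, sfun_apply]
      by_cases h : i ≤ N ∧ idnLE (m i) ℓ <;> simp [h]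

/-- Birkhoff-type construction: realizing a down-closed set of indices as a `Spec`. -/
lemma birkhoff (hm : IsEnumI d n N m) (D : Finset ℕ)
    (hD1 : ∀ i ∈ D, 1 ≤ i ∧ i ≤ N)
    (hDdc : ∀ i j, 1 ≤ i → i ≤ N → j ∈ D → idnLE (m i) (m j) → i ∈ D) :
    ∃ ℓ : Idn d n, ∀ k, 1 ≤ k → k ≤ N → (idnLE (m k) ℓ ↔ k ∈ D) := by
  classical
  refine ⟨listJoin (m 0) (D.toList.map m), fun k hk1 hkN => ⟨fun h => ?_, fun h => ?_⟩⟩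
  · rcases ji_le_listJoin (hm.2.2.1 k hkN) h with h1 | ⟨a, ha, h1⟩
    · exfalso
      have h2 : idnLE (m 0) (m k) := idn_bot_le hm.1 (m k)
      have h3 : m k = m 0 := idnLE_antisymm h1 h2
      have := hm.2.1 k hkN 0 (Nat.zero_le N) h3
      omega
    · obtain ⟨i, hi, rfl⟩ := List.mem_map.mp ha
      have hiD : i ∈ D := Finset.mem_toList.mp hi
      exact hDdc k i hk1 hkN hiD h1
  · exact le_listJoin_mem _ _ (List.mem_map.mpr ⟨k, Finset.mem_toList.mpr h, rfl⟩)

end Part1b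
section Part1c

open MvPolynomial Classical Finset

variable {d n : ℕ} (N : ℕ) (m : ℕ → Idn d n)

lemma vertex_case (hm : IsEnumI d n N m) {x : ℕ → ℝ} (hx : x ∈ RHSset d n N m)
    (h01 : ∀ i, 1 ≤ i → i ≤ N → x i = 0 ∨ x i = 1) : x ∈ Sset d n N m := by
  classical
  obtain ⟨hx0, hx1, hx2, hx3⟩ := hx
  set D := (Finset.Icc 1 N).filter (fun i => x i = 1) with hD
  have hD1 : ∀ i ∈ D, 1 ≤ i ∧ i ≤ N := by
    intro i hi
    rw [hD, Finset.mem_filter, Finset.mem_Icc] at hi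
    exact hi.1
  have hDdc : ∀ i j, 1 ≤ i → i ≤ N → j ∈ D → idnLE (m i) (m j) → i ∈ D := by
    intro i j h1 h2 hj hij
    rw [hD, Finset.mem_filter, Finset.mem_Icc] at hj ⊢
    obtain ⟨⟨hj1, hj2⟩, hj3⟩ := hj
    have h4 := hx2 i j h1 h2 hj1 hj2 hij
    have h5 := hx1 i h1 h2
    exact ⟨⟨h1, h2⟩, by linarith⟩
  obtain ⟨ℓ, hℓ⟩ := birkhoff N m hm D hD1 hDdc
  have hxv : x = vpt N m ℓ := by
    funext i
    rw [vpt]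
    by_cases h0 : i = 0
    · rw [if_pos h0, h0, hx0]
    · rw [if_neg h0]
      have h1 : 1 ≤ i := Nat.one_le_iff_ne_zero.mpr h0
      by_cases hN : i ≤ N
      · rw [hℓ i h1 hN]
        rcases h01 i h1 hN with h | h
        · rw [if_neg, h]
          intro hc
          rw [hD, Finset.mem_filter] at hc
          have := hc.2.2
          rw [h] at this
          norm_num at this
        · rw [if_pos]
          · exact h
          · exact ⟨hN, by rw [hD, Finset.mem_filter, Finset.mem_Icc]; exact ⟨⟨h1, hN⟩, h⟩⟩
      · rw [if_neg (fun hc => hN hc.1)]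
        exact hx3 i (by omega)
  rw [hxv]
  exact vpt_mem_sset N m hm.1 ℓ

lemma rhs_sub_conv (hm : IsEnumI d n N m) :
    ∀ k : ℕ, ∀ x ∈ RHSset d n N m,
      (((Finset.Icc 1 N).image x).filter (fun r : ℝ => r ≠ 0 ∧ r ≠ 1)).card ≤ k →
      x ∈ convexHull ℝ (Sset d n N m) := by
  classical
  intro k
  induction k with
  | zero =>
    intro x hx hc
    have h01 : ∀ i, 1 ≤ i → i ≤ N → x i = 0 ∨ x i = 1 := by
      intro i h1 h2
      by_contra hcon
      push_neg at hcon
      have hmem : x i ∈ ((Finset.Icc 1 N).image x).filter (fun r : ℝ => r ≠ 0 ∧ r ≠ 1) :=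
        Finset.mem_filter.mpr ⟨Finset.mem_image.mpr ⟨i, Finset.mem_Icc.mpr ⟨h1, h2⟩, rfl⟩, hcon⟩
      have := Finset.card_pos.mpr ⟨_, hmem⟩
      omega
    exact subset_convexHull ℝ _ (vertex_case N m hm hx h01)
  | succ k ih =>
    intro x hx hc
    by_cases h01 : ∀ i, 1 ≤ i → i ≤ N → x i = 0 ∨ x i = 1
    · exact subset_convexHull ℝ _ (vertex_case N m hm hx h01)
    push_neg at h01
    obtain ⟨i₀, h₀1, h₀2, h₀ne0, h₀ne1⟩ := h01
    obtain ⟨hx0, hx1, hx2, hx3⟩ := hx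
    have h₀pos : 0 < x i₀ := lt_of_le_of_ne (hx1 i₀ h₀1 h₀2).1 (Ne.symm h₀ne0)
    have h₀lt1 : x i₀ < 1 := lt_of_le_of_ne (hx1 i₀ h₀1 h₀2).2 h₀ne1
    set P := (Finset.Icc 1 N).filter (fun i => 0 < x i) with hP
    have hi₀P : i₀ ∈ P := by
      rw [hP, Finset.mem_filter, Finset.mem_Icc]; exact ⟨⟨h₀1, h₀2⟩, h₀pos⟩
    have hTne : (P.image x).Nonempty := ⟨x i₀, Finset.mem_image_of_mem x hi₀P⟩
    set t := (P.image x).min' hTne with htdef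
    obtain ⟨i₁, hi₁P, hi₁⟩ := Finset.mem_image.mp ((P.image x).min'_mem hTne)
    have ht_pos : 0 < t := by
      rw [htdef, ← hi₁]
      exact (Finset.mem_filter.mp hi₁P).2
    have ht_le : ∀ i, i ∈ P → t ≤ x i := fun i hi =>
      Finset.min'_le _ _ (Finset.mem_image_of_mem x hi)
    have ht_lt1 : t < 1 := lt_of_le_of_lt (ht_le i₀ hi₀P) h₀lt1
    have h1t : (0:ℝ) < 1 - t := by linarith
    have h1t' : (1:ℝ) - t ≠ 0 := ne_of_gt h1t
    -- the vertex
    have hD1 : ∀ i ∈ P, 1 ≤ i ∧ i ≤ N := by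
      intro i hi
      rw [hP, Finset.mem_filter, Finset.mem_Icc] at hi
      exact hi.1
    have hDdc : ∀ i j, 1 ≤ i → i ≤ N → j ∈ P → idnLE (m i) (m j) → i ∈ P := by
      intro i j h1 h2 hj hij
      rw [hP, Finset.mem_filter, Finset.mem_Icc] at hj ⊢
      obtain ⟨⟨hj1, hj2⟩, hj3⟩ := hj
      have := hx2 i j h1 h2 hj1 hj2 hij
      exact ⟨⟨h1, h2⟩, by linarith⟩
    obtain ⟨ℓ, hℓ⟩ := birkhoff N m hm P hD1 hDdc
    set v := vpt N m ℓ with hvdef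
    have hv0 : v 0 = 1 := by simp [hvdef, vpt]
    have hv : ∀ i, 1 ≤ i → i ≤ N → v i = if 0 < x i then 1 else 0 := by
      intro i h1 h2
      rw [hvdef, vpt, if_neg (by omega : ¬ i = 0)]
      by_cases h : 0 < x i
      · rw [if_pos h, if_pos ⟨h2, (hℓ i h1 h2).mpr (by
          rw [hP, Finset.mem_filter, Finset.mem_Icc]; exact ⟨⟨h1, h2⟩, h⟩)⟩]
      · rw [if_neg h, if_neg]
        intro hc
        have := (hℓ i h1 h2).mp hc.2
        rw [hP, Finset.mem_filter] at this
        exact h this.2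
    have hvN : ∀ i, N < i → v i = 0 := by
      intro i hi
      rw [hvdef, vpt, if_neg (by omega : ¬ i = 0), if_neg (fun hc => by omega)]
    -- the residual point
    set y : ℕ → ℝ := fun i => (x i - t * v i) / (1 - t) with hydef
    have hxzero : ∀ i, 1 ≤ i → i ≤ N → ¬ 0 < x i → x i = 0 := by
      intro i h1 h2 h3
      have := (hx1 i h1 h2).1
      linarith
    have hy_rhs : y ∈ RHSset d n N m := by
      refine ⟨?_, ?_, ?_, ?_⟩
      · rw [hydef]
        simp only []
        rw [hx0, hv0]
        field_simp
      · intro i h1 h2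
        rw [hydef]
        simp only []
        rw [hv i h1 h2]
        by_cases h : 0 < x i
        · rw [if_pos h]
          have hle := ht_le i (by rw [hP, Finset.mem_filter, Finset.mem_Icc]; exact ⟨⟨h1, h2⟩, h⟩)
          have := (hx1 i h1 h2).2
          constructor
          · apply div_nonneg (by linarith) h1t.le
          · rw [div_le_one h1t]; linarith
        · rw [if_neg h, hxzero i h1 h2 h]
          norm_num
      · intro i j h1 h2 h3 h4 h5
        rw [hydef]
        simp only []
        rw [hv i h1 h2, hv j h3 h4]
        have hji := hx2 i j h1 h2 h3 h4 h5
        by_cases hj : 0 < x j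
        · have hi : 0 < x i := by linarith
          rw [if_pos hj, if_pos hi]
          rw [div_le_div_iff₀ h1t h1t]
          nlinarith
        · rw [if_neg hj, hxzero j h3 h4 hj]
          norm_num
          by_cases hi : 0 < x i
          · rw [if_pos hi]
            have hle := ht_le i (by rw [hP, Finset.mem_filter, Finset.mem_Icc]; exact ⟨⟨h1, h2⟩, hi⟩)
            apply div_nonneg (by linarith) h1t.le
          · rw [if_neg hi, hxzero i h1 h2 hi]
            norm_num
      · intro i hi
        rw [hydef]
        simp only []
        rw [hx3 i hi, hvN i hi]
        norm_num
    -- fractional count decreases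
    set f : ℝ → ℝ := fun r => if 0 < r then (r - t) / (1 - t) else 0 with hfdef
    have hyf : ∀ i ∈ Finset.Icc 1 N, y i = f (x i) := by
      intro i hi
      rw [Finset.mem_Icc] at hi
      rw [hydef, hfdef]
      simp only []
      rw [hv i hi.1 hi.2]
      by_cases h : 0 < x i
      · rw [if_pos h, if_pos h, mul_one]
      · rw [if_neg h, if_neg h, hxzero i hi.1 hi.2 h]
        norm_num
    have himg : (Finset.Icc 1 N).image y = ((Finset.Icc 1 N).image x).image f := by
      rw [Finset.image_image]
      exact Finset.image_congr (fun i hi => hyf i hi)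
    have htfrac : t ∈ ((Finset.Icc 1 N).image x).filter (fun r : ℝ => r ≠ 0 ∧ r ≠ 1) := by
      refine Finset.mem_filter.mpr ⟨?_, ne_of_gt ht_pos, ne_of_lt ht_lt1⟩
      exact Finset.mem_image.mpr ⟨i₁, Finset.filter_subset _ _ hi₁P, hi₁⟩
    have hsub : ((Finset.Icc 1 N).image y).filter (fun r : ℝ => r ≠ 0 ∧ r ≠ 1) ⊆
        ((((Finset.Icc 1 N).image x).filter (fun r : ℝ => r ≠ 0 ∧ r ≠ 1)).erase t).image f := by
      intro b hb
      rw [Finset.mem_filter, himg] at hb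
      obtain ⟨hb1, hb2, hb3⟩ := hb
      obtain ⟨a, ha, hfa⟩ := Finset.mem_image.mp hb1
      have hapos : 0 < a := by
        by_contra hc
        rw [hfdef] at hfa
        simp only [if_neg hc] at hfa
        exact hb2 hfa.symm
      have hfa' : (a - t) / (1 - t) = b := by
        rw [hfdef] at hfa; simpa [if_pos hapos] using hfa
      have hat : a ≠ t := by
        intro hc
        rw [hc] at hfa'
        simp at hfa'
        exact hb2 hfa'.symm
      have ha1 : a ≠ 1 := by
        intro hc
        rw [hc] at hfa'
        rw [div_self h1t'] at hfa'
        exact hb3 hfa'.symm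
      refine Finset.mem_image.mpr ⟨a, ?_, hfa⟩
      exact Finset.mem_erase.mpr ⟨hat, Finset.mem_filter.mpr ⟨ha, ne_of_gt hapos, ha1⟩⟩
    have hcard : (((Finset.Icc 1 N).image y).filter (fun r : ℝ => r ≠ 0 ∧ r ≠ 1)).card ≤ k := by
      have c1 := Finset.card_le_card hsub
      have c2 := Finset.card_image_le (s := (((Finset.Icc 1 N).image x).filter
        (fun r : ℝ => r ≠ 0 ∧ r ≠ 1)).erase t) (f := f)
      have c3 := Finset.card_erase_of_mem htfrac
      omega
    have hy_conv := ih y hy_rhs hcard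
    have hsplit : x = t • v + (1 - t) • y := by
      funext i
      show x i = t * v i + (1 - t) * ((x i - t * v i) / (1 - t))
      field_simp
      ring
    rw [hsplit]
    exact (convex_convexHull ℝ (Sset d n N m))
      (subset_convexHull ℝ _ (vpt_mem_sset N m hm.1 ℓ)) hy_conv
      ht_pos.le (by linarith) (by ring)

end Part1c
section Part2

open Finset

variable {d n : ℕ}

/-- classification of nontrivial join-irreducibles. -/
lemma ji_classify (hd : 0 < d) (hdn : d ≤ n) (x : Idn d n) (hji : idnJI x)
    (hnb : ∃ r : Fin d, x.val r ≠ (r : ℕ) + 1) :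
    ∃ c : ℕ, 1 ≤ c ∧ c ≤ n - d ∧ x.val ⟨d - 1, by omega⟩ = d + c ∧
      ∀ t : Fin d, x.val t = (t : ℕ) + 1 ∨ x.val t = (t : ℕ) + 1 + c := by
  set last : Fin d := ⟨d - 1, by omega⟩ with hlast
  have hub : ∀ t : Fin d, x.val t ≤ n := fun t => (x.prop.2 t).2
  have hlb : ∀ t : Fin d, (t : ℕ) + 1 ≤ x.val t := idn_lb x
  have hgap : ∀ i j : Fin d, (i : ℕ) ≤ (j : ℕ) → x.val i + ((j : ℕ) - (i : ℕ)) ≤ x.val j :=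
    fun i j hij => sm_gap x.prop.1 _ i j (by omega)
  obtain ⟨r, hr⟩ := hnb
  have hrlast : (r : ℕ) ≤ (last : ℕ) := by
    have := r.isLt; simp [hlast]; omega
  have hxr : (r : ℕ) + 2 ≤ x.val r := by have := hlb r; omega
  have hlastlb : d + 1 ≤ x.val last := by
    have := hgap r last hrlast
    have : (last : ℕ) = d - 1 := rfl
    omega
  set c : ℕ := x.val last - d with hc
  have hxlast : x.val last = d + c := by
    have := hlastlb; omega
  refine ⟨c, by omega, ?_, hxlast, ?_⟩
  · have := hub last; omega
  · by_contra hcon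
    push_neg at hcon
    obtain ⟨s, hs1, hs2⟩ := hcon
    -- the gap at s is strictly between 0 and c
    have hslast : (s : ℕ) ≤ (last : ℕ) := by have := s.isLt; simp [hlast]; omega
    have hsgap : x.val s + ((last : ℕ) - (s : ℕ)) ≤ x.val last := hgap s last hslast
    have hlow : (s : ℕ) + 2 ≤ x.val s := by have := hlb s; omega
    have hhigh : x.val s < (s : ℕ) + 1 + c := by
      have : (last : ℕ) = d - 1 := rfl
      omega
    set gs : ℕ := x.val s - ((s : ℕ) + 1) with hgs
    have hgs1 : 1 ≤ gs := by omega
    have hgsc : gs < c := by omega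
    have hxs : x.val s = (s : ℕ) + 1 + gs := by omega
    -- construct the two elements
    set a : Idn d n := ⟨fun t => min (x.val t) ((t : ℕ) + 1 + gs), by
      constructor
      · intro i j hij
        have hij' : (i : ℕ) < (j : ℕ) := hij
        exact lt_min ((min_le_left _ _).trans_lt (x.prop.1 hij))
          ((min_le_right _ _).trans_lt (by omega))
      · intro t
        exact ⟨le_min (x.prop.2 t).1 (by omega), (min_le_left _ _).trans (hub t)⟩⟩
      with ha
    set b : Idn d n := ⟨fun t => if x.val t ≤ (t : ℕ) + 1 + gs then (t : ℕ) + 1 else x.val t, by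
      constructor
      · intro i j hij
        have hij' : (i : ℕ) < (j : ℕ) := hij
        have hg := hgap i j (by omega)
        have hxij : x.val i < x.val j := x.prop.1 hij
        have hlbj := hlb j
        show (if x.val i ≤ (i : ℕ) + 1 + gs then (i : ℕ) + 1 else x.val i) <
             (if x.val j ≤ (j : ℕ) + 1 + gs then (j : ℕ) + 1 else x.val j)
        split_ifs <;> omega
      · intro t
        have h1 := hlb t
        have h2 := hub t
        show 1 ≤ (if x.val t ≤ (t : ℕ) + 1 + gs then (t : ℕ) + 1 else x.val t) ∧
             (if x.val t ≤ (t : ℕ) + 1 + gs then (t : ℕ) + 1 else x.val t) ≤ n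
        split_ifs <;> omega⟩
      with hb
    have hjoin : x = idnJoin a b := by
      apply Subtype.ext; funext t
      show x.val t = max (a.val t) (b.val t)
      rw [ha, hb]
      simp only []
      by_cases hbt : x.val t ≤ (t : ℕ) + 1 + gs
      · rw [if_pos hbt]
        have := hlb t
        omega
      · rw [if_neg hbt]
        omega
    rcases hji a b hjoin with he | he
    · have := congrFun (congrArg Subtype.val he) last
      rw [ha] at this
      simp only [] at this
      rw [hxlast] at this
      have hl : (last : ℕ) = d - 1 := rfl
      omega
    · have := congrFun (congrArg Subtype.val he) s
      rw [hb] at this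
      simp only [] at this
      rw [if_pos (by omega)] at this
      omega

/-- rectangles are join-irreducible. -/
lemma rect_ji (hd : 0 < d) (c τ : ℕ) (hc : 1 ≤ c) (hτ : τ < d) (x : Idn d n)
    (hx : ∀ t : Fin d, ((t : ℕ) < τ → x.val t = (t : ℕ) + 1) ∧
      (τ ≤ (t : ℕ) → x.val t = (t : ℕ) + 1 + c)) : idnJI x := by
  have hgap : ∀ (v : Fin d → ℕ), StrictMono v →
      ∀ i j : Fin d, (i : ℕ) ≤ (j : ℕ) → v i + ((j : ℕ) - (i : ℕ)) ≤ v j :=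
    fun v hv i j hij => sm_gap hv _ i j (by omega)
  set τ' : Fin d := ⟨τ, hτ⟩ with hτ'
  have helper : ∀ a : Idn d n, (∀ t, a.val t ≤ x.val t) → a.val τ' = x.val τ' → a = x := by
    intro a hle heq
    apply Subtype.ext; funext t
    rcases Nat.lt_or_ge (t : ℕ) τ with h | h
    · have h1 := idn_lb a t
      have h2 := (hx t).1 h
      have h3 := hle t
      omega
    · have h1 := hgap a.val a.prop.1 τ' t h
      have h2 := (hx t).2 h
      have h3 := (hx τ').2 (le_refl τ)
      have h4 := hle t
      omega
  intro a b heq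
  have hmax : ∀ t, x.val t = max (a.val t) (b.val t) := fun t =>
    congrFun (congrArg Subtype.val heq) t
  have hale : ∀ t, a.val t ≤ x.val t := fun t => by rw [hmax t]; omega
  have hble : ∀ t, b.val t ≤ x.val t := fun t => by rw [hmax t]; omega
  rcases max_choice (a.val τ') (b.val τ') with h | h
  · exact Or.inl (helper a hale (by rw [hmax τ', h])).symm
  · exact Or.inr (helper b hble (by rw [hmax τ', h])).symm

/-- up-closed subsets of `Fin d` are nested according to cardinality. -/
lemma upset_sub (A B : Finset (Fin d))
    (hA : ∀ t ∈ A, ∀ t', t ≤ t' → t' ∈ A) (hB : ∀ t ∈ B, ∀ t', t ≤ t' → t' ∈ B)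
    (hcard : A.card ≤ B.card) : A ⊆ B := by
  intro t ht
  by_contra htB
  have h1 : Finset.Ici t ⊆ A := fun t' ht' => hA t ht t' (Finset.mem_Ici.mp ht')
  have h2 : B ⊆ Finset.Ioi t := by
    intro b hb
    rw [Finset.mem_Ioi]
    rcases lt_or_ge t b with h | h
    · exact h
    · exact absurd (hB b hb t h) htB
  have c1 := Finset.card_le_card h1
  have c2 := Finset.card_le_card h2
  rw [Fin.card_Ici] at c1
  rw [Fin.card_Ioi] at c2
  have := t.isLt
  omega

lemma card_upseg (hd : 0 < d) (τ : ℕ) (hτ : τ < d) :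
    (Finset.univ.filter (fun t : Fin d => τ ≤ (t : ℕ))).card = d - τ := by
  have : Finset.univ.filter (fun t : Fin d => τ ≤ (t : ℕ)) = Finset.Ici (⟨τ, hτ⟩ : Fin d) := by
    ext t
    simp [Finset.mem_Ici, Fin.le_def]
  rw [this, Fin.card_Ici]

end Part2
section Final

variable {d n : ℕ}

lemma part1_final (N : ℕ) (m : ℕ → Idn d n) (hm : IsEnumI d n N m) :
    closure (convexHull ℝ (Sset d n N m)) = RHSset d n N m :=
  Set.Subset.antisymm
    (closure_minimal (convexHull_min (sset_sub_rhs d n N m hm.1) (rhs_convex d n N m))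
      (rhs_closed d n N m))
    (fun x hx => subset_closure (rhs_sub_conv N m hm _ x hx le_rfl))

open Finset in
open Classical in
lemma part2_final (hd : 0 < d) (hdn : d ≤ n) :
    ∃ e : {x : Idn d n // idnJI x ∧ ∃ r : Fin d, x.val r ≠ (r : ℕ) + 1} → ℕ × ℕ,
      Function.Injective e ∧ Set.range e = Rset d n ∧
      ∀ a b : {x : Idn d n // idnJI x ∧ ∃ r : Fin d, x.val r ≠ (r : ℕ) + 1},
        (idnLE a.val b.val ↔ e a ≤ e b) := by
  classical
  set last : Fin d := ⟨d - 1, by omega⟩ with hlast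
  have hlastv : (last : ℕ) = d - 1 := rfl
  set Sub := {x : Idn d n // idnJI x ∧ ∃ r : Fin d, x.val r ≠ (r : ℕ) + 1} with hSub
  set R : Sub → Finset (Fin d) :=
    fun x => Finset.univ.filter (fun t : Fin d => x.val.val t ≠ (t : ℕ) + 1) with hR
  set e : Sub → ℕ × ℕ := fun x => ((R x).card, x.val.val last - 1) with he
  have key : ∀ x : Sub, ∃ c : ℕ, 1 ≤ c ∧ c ≤ n - d ∧ x.val.val last = d + c ∧
      ∀ t : Fin d, x.val.val t = (t : ℕ) + 1 ∨ x.val.val t = (t : ℕ) + 1 + c :=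
    fun x => ji_classify hd hdn x.val x.prop.1 x.prop.2
  have hgap : ∀ (x : Idn d n) (i j : Fin d), (i : ℕ) ≤ (j : ℕ) →
      x.val i + ((j : ℕ) - (i : ℕ)) ≤ x.val j :=
    fun x i j hij => sm_gap x.prop.1 _ i j (by omega)
  have hRmem : ∀ (x : Sub) (t : Fin d), t ∈ R x ↔ x.val.val t ≠ (t : ℕ) + 1 := by
    intro x t
    rw [hR, Finset.mem_filter]
    simp
  have hRup : ∀ x : Sub, ∀ t ∈ R x, ∀ t', t ≤ t' → t' ∈ R x := by
    intro x t ht t' htt'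
    obtain ⟨c, hc1, hc2, hc3, hc4⟩ := key x
    rw [hRmem] at ht ⊢
    have h1 := hgap x.val t t' htt'
    have h2 := idn_lb x.val t
    rcases hc4 t with h | h
    · exact absurd h ht
    · omega
  have hlastR : ∀ x : Sub, last ∈ R x := by
    intro x
    obtain ⟨c, hc1, hc2, hc3, hc4⟩ := key x
    rw [hRmem, hc3, hlastv]
    omega
  refine ⟨e, ?_, ?_, ?_⟩
  · -- injectivity
    intro a b heq
    obtain ⟨ca, hca1, hca2, hca3, hca4⟩ := key a
    obtain ⟨cb, hcb1, hcb2, hcb3, hcb4⟩ := key b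
    have h1 : (R a).card = (R b).card := congrArg Prod.fst heq
    have h2 : a.val.val last - 1 = b.val.val last - 1 := congrArg Prod.snd heq
    have hcab : ca = cb := by rw [hca3, hcb3] at h2; omega
    have hRab : R a = R b :=
      Finset.Subset.antisymm (upset_sub _ _ (hRup a) (hRup b) h1.le)
        (upset_sub _ _ (hRup b) (hRup a) h1.ge)
    apply Subtype.ext; apply Subtype.ext; funext t
    rcases hca4 t with h | h
    · have ht : t ∉ R a := by rw [hRmem]; simpa using h
      rw [hRab, hRmem] at ht
      push_neg at ht
      rw [h, ht]
    · have ht : t ∈ R a := by rw [hRmem, h]; omega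
      rw [hRab, hRmem] at ht
      rcases hcb4 t with h' | h'
      · exact absurd h' ht
      · rw [h, h', hcab]
  · -- range
    ext p
    constructor
    · rintro ⟨x, rfl⟩
      obtain ⟨c, hc1, hc2, hc3, hc4⟩ := key x
      have hcard1 : 1 ≤ (R x).card := Finset.card_pos.mpr ⟨last, hlastR x⟩
      have hcardd : (R x).card ≤ d := by
        have := Finset.card_filter_le Finset.univ
          (fun t : Fin d => x.val.val t ≠ (t : ℕ) + 1)
        rwa [Finset.card_univ, Fintype.card_fin] at this
      refine ⟨hcard1, hcardd, ?_, ?_⟩ <;> rw [he] <;> simp only [hc3] <;> omega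
    · rintro ⟨h1, h2, h3, h4⟩
      set p1 := p.1 with hp1
      set p2 := p.2 with hp2
      set τ : ℕ := d - p1 with hτ
      set c : ℕ := p2 - d + 1 with hcdef
      have hc1 : 1 ≤ c := by omega
      have hτd : τ < d := by omega
      have hn1 : 1 ≤ n := by omega
      have hdc : d + c ≤ n := by omega
      set xv : Idn d n := ⟨fun t => if (t : ℕ) < τ then (t : ℕ) + 1 else (t : ℕ) + 1 + c, by
        constructor
        · intro i j hij
          have hij' : (i : ℕ) < (j : ℕ) := hij
          show (if (i : ℕ) < τ then (i : ℕ) + 1 else (i : ℕ) + 1 + c) <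
               (if (j : ℕ) < τ then (j : ℕ) + 1 else (j : ℕ) + 1 + c)
          split_ifs <;> omega
        · intro t
          have ht := t.isLt
          show 1 ≤ (if (t : ℕ) < τ then (t : ℕ) + 1 else (t : ℕ) + 1 + c) ∧
               (if (t : ℕ) < τ then (t : ℕ) + 1 else (t : ℕ) + 1 + c) ≤ n
          split_ifs <;> omega⟩ with hxv
      have hxvval : ∀ t : Fin d,
          xv.val t = if (t : ℕ) < τ then (t : ℕ) + 1 else (t : ℕ) + 1 + c := fun t => rfl
      have hji : idnJI xv := by
        apply rect_ji hd c τ hc1 hτd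
        intro t
        constructor
        · intro h; rw [hxvval, if_pos h]
        · intro h; rw [hxvval, if_neg (by omega)]
      have hnb : ∃ r : Fin d, xv.val r ≠ (r : ℕ) + 1 := by
        refine ⟨last, ?_⟩
        rw [hxvval, if_neg (by rw [hlastv]; omega)]
        omega
      refine ⟨⟨xv, hji, hnb⟩, ?_⟩
      have hRxv : R ⟨xv, hji, hnb⟩ = Finset.univ.filter (fun t : Fin d => τ ≤ (t : ℕ)) := by
        apply Finset.filter_congr
        intro t _
        rw [hxvval]
        constructor
        · intro h
          by_contra hc
          rw [if_pos (by omega)] at h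
          exact h rfl
        · intro h
          rw [if_neg (by omega)]
          omega
      rw [he]
      simp only []
      rw [hRxv, card_upseg hd τ hτd]
      show (d - τ, (if d - 1 < τ then d - 1 + 1 else d - 1 + 1 + c) - 1) = p
      rw [if_neg (by omega : ¬ d - 1 < τ)]
      have hpp : p = (p1, p2) := rfl
      rw [hpp, Prod.mk.injEq]
      constructor <;> omega
  · -- order
    intro a b
    obtain ⟨ca, hca1, hca2, hca3, hca4⟩ := key a
    obtain ⟨cb, hcb1, hcb2, hcb3, hcb4⟩ := key b
    constructor
    · intro hle
      have hsub : R a ⊆ R b := by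
        intro t ht
        rw [hRmem] at ht ⊢
        have h1 := hle t
        have h2 := idn_lb a.val t
        rcases hca4 t with h | h
        · exact absurd h ht
        · omega
      refine ⟨Finset.card_le_card hsub, ?_⟩
      have := hle last
      simp only [he]
      omega
    · rintro ⟨hcard, hsec⟩
      have hsub : R a ⊆ R b := upset_sub _ _ (hRup a) (hRup b) hcard
      have hcab : ca ≤ cb := by
        simp only [he] at hsec
        rw [hca3, hcb3] at hsec
        omega
      intro t
      have hlbb := idn_lb b.val t
      rcases hca4 t with h | h
      · rw [h]; omega
      · have ht : t ∈ R a := by rw [hRmem, h]; omega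
        have htb := hsub ht
        rw [hRmem] at htb
        rcases hcb4 t with h' | h'
        · exact absurd h' htb
        · rw [h, h']; omega

end Final

/-- for `L = I(d,n)`, `N = d(n−d)` and a maximal chain `C` (through its
order-preserving enumeration `m` of the join-irreducibles), the Newton–Okounkov body
`NO_C = closure (conv (∪_{j ≥ 1} Γ_j / j))` equals `{1} × P`, where `P` is the order
polytope of the poset `J(L) \ {⊥}` transported by the coordinate identification
`i ↦ m i` (`i = 1, …, N`).  Moreover the poset `J(L) \ {⊥}` is isomorphic to the grid
poset `R_{d,n}`, so `NO_C` is unimodularly equivalent to the Gelfand–Tsetlin polytope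
of `Gr_{d,n}`. -/
theorem stmt19 (d n : ℕ) (hd : 0 < d) (hdn : d ≤ n)
    (m : ℕ → Idn d n) (hm : IsEnumI d n (d * (n - d)) m) :
    closure (convexHull ℝ
      {x : ℕ → ℝ | ∃ j : ℕ, 1 ≤ j ∧ ∃ w ∈ Gam d n (d * (n - d)) m j,
        x = (j : ℝ)⁻¹ • fun i : ℕ => (w i : ℝ)})
      = {x : ℕ → ℝ | x 0 = 1 ∧
          (∀ i : ℕ, 1 ≤ i → i ≤ d * (n - d) → 0 ≤ x i ∧ x i ≤ 1) ∧
          (∀ i j : ℕ, 1 ≤ i → i ≤ d * (n - d) → 1 ≤ j → j ≤ d * (n - d) →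
            idnLE (m i) (m j) → x j ≤ x i) ∧
          (∀ i : ℕ, d * (n - d) < i → x i = 0)} ∧
    ∃ e : {x : Idn d n // idnJI x ∧ ∃ r : Fin d, x.val r ≠ (r : ℕ) + 1} → ℕ × ℕ,
      Function.Injective e ∧ Set.range e = Rset d n ∧
      ∀ a b : {x : Idn d n // idnJI x ∧ ∃ r : Fin d, x.val r ≠ (r : ℕ) + 1},
        (idnLE a.val b.val ↔ e a ≤ e b) := by
  constructor
  · exact part1_final (d * (n - d)) m hm
  · exact part2_final hd hdn
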